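/- Let ι be a finite nonempty index type, let ψ₀ and ψ⋆ be unit vectors in EuclideanSpace ℂ ι, let U be a unitary operator on EuclideanSpace ℂ ι, let γ : ℝ and s : ι → ℝ, and let Sψ₀ be the vector with components (Sψ₀) w = exp(-I·γ·s w) · (ψ₀ w). Then | ‖⟪ψ⋆, U ψ₀⟫‖ - ‖⟪ψ⋆, U (Sψ₀)⟫‖ | ≤ Real.sqrt (∑ w, 4 · ‖ψ₀ w‖² · (Real.sin (γ · s w / 2))²). -/

import Mathlib

open scoped InnerProductSpace BigOperators

lemma norm_one_sub_exp_sq (θ : ℝ) :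
    ‖(1 : ℂ) - Complex.exp (-Complex.I * θ)‖ ^ 2 = 4 * Real.sin (θ / 2) ^ 2 := by
  have h : Complex.exp (-Complex.I * θ) = Complex.exp ((-θ : ℝ) * Complex.I) := by
    push_cast; ring_nf
  rw [h, Complex.exp_mul_I]
  rw [Complex.sq_norm, Complex.normSq_apply]
  push_cast
  simp [Complex.cos_ofReal_re, Complex.sin_ofReal_re, Complex.add_re, Complex.sub_re,
    Complex.mul_re, Complex.ofReal_re, Complex.ofReal_im, Complex.I_re, Complex.I_im,
    Complex.one_re, Complex.one_im, Complex.add_im, Complex.sub_im, Complex.mul_im]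
  have hcos := Real.cos_sq (θ / 2)
  rw [show 2 * (θ / 2) = θ by ring] at hcos
  nlinarith [Real.sin_sq_add_cos_sq (θ / 2), Real.sin_sq_add_cos_sq θ]

/-- Perturbing the initial state of a protocol by a diagonal phase operator
`e^{-iγ s(w)}` changes the final overlap with any target state by at most the
weak-overlap quantity `√(∑ w, 4 |ψ₀ w|² sin²(γ s(w)/2))`. -/
theorem phase_perturbation_overlap_bound
    {ι : Type*} [Fintype ι] [Nonempty ι]
    (ψ₀ ψstar : EuclideanSpace ℂ ι)
    (hψ₀ : ‖ψ₀‖ = 1) (hψstar : ‖ψstar‖ = 1)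
    (U : EuclideanSpace ℂ ι ≃ₗᵢ[ℂ] EuclideanSpace ℂ ι)
    (γ : ℝ) (s : ι → ℝ)
    (Sψ₀ : EuclideanSpace ℂ ι)
    (hS : ∀ w, Sψ₀ w = Complex.exp (-Complex.I * γ * s w) * ψ₀ w) :
    |‖⟪ψstar, U ψ₀⟫_ℂ‖ - ‖⟪ψstar, U Sψ₀⟫_ℂ‖|
      ≤ Real.sqrt (∑ w, 4 * ‖ψ₀ w‖ ^ 2 * Real.sin (γ * s w / 2) ^ 2) := by
  have h1 : |‖⟪ψstar, U ψ₀⟫_ℂ‖ - ‖⟪ψstar, U Sψ₀⟫_ℂ‖|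
      ≤ ‖⟪ψstar, U ψ₀⟫_ℂ - ⟪ψstar, U Sψ₀⟫_ℂ‖ := abs_norm_sub_norm_le _ _
  have h2 : ⟪ψstar, U ψ₀⟫_ℂ - ⟪ψstar, U Sψ₀⟫_ℂ = ⟪ψstar, U (ψ₀ - Sψ₀)⟫_ℂ := by
    rw [map_sub, inner_sub_right]
  have h3 : ‖⟪ψstar, U (ψ₀ - Sψ₀)⟫_ℂ‖ ≤ ‖ψstar‖ * ‖U (ψ₀ - Sψ₀)‖ :=
    norm_inner_le_norm _ _
  have h4 : ‖U (ψ₀ - Sψ₀)‖ = ‖ψ₀ - Sψ₀‖ := U.norm_map _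
  have h5 : ‖ψ₀ - Sψ₀‖ = Real.sqrt (∑ w, 4 * ‖ψ₀ w‖ ^ 2 * Real.sin (γ * s w / 2) ^ 2) := by
    rw [EuclideanSpace.norm_eq]
    congr 1
    apply Finset.sum_congr rfl
    intro w _
    have hw : (ψ₀ - Sψ₀) w = (1 - Complex.exp (-Complex.I * γ * s w)) * ψ₀ w := by
      simp [hS w]; ring
    rw [hw, norm_mul, mul_pow]
    have := norm_one_sub_exp_sq (γ * s w)
    rw [show -Complex.I * γ * s w = -Complex.I * ((γ : ℂ) * s w) by ring] at hw ⊢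
    rw [show -Complex.I * ((γ : ℂ) * s w) = -Complex.I * ((γ * s w : ℝ) : ℂ) by push_cast; ring]
    rw [this]
    ring
  calc |‖⟪ψstar, U ψ₀⟫_ℂ‖ - ‖⟪ψstar, U Sψ₀⟫_ℂ‖|
      ≤ ‖⟪ψstar, U (ψ₀ - Sψ₀)⟫_ℂ‖ := by rw [← h2]; exact h1
    _ ≤ ‖ψstar‖ * ‖U (ψ₀ - Sψ₀)‖ := h3
    _ = Real.sqrt (∑ w, 4 * ‖ψ₀ w‖ ^ 2 * Real.sin (γ * s w / 2) ^ 2) := by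
        rw [hψstar, one_mul, h4, h5]
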